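/- In any run of the closed-loop system under the on-line supervisor Ŝ, neutral transitions (transitions (x, σ, x') with ξ(x) ≤ ξ(x') < α) occur only finitely often: there is no infinite event sequence s ∈ Σ^ω consistent with Ŝ such that for all k there exists l ≥ k with ξ(δ_P(x_{P,0}, s[0..l])) ≤ ξ(δ_P(x_{P,0}, s[0..l+1])). -/

import Mathlib

open scoped Classical

/-- Extended (partial) transition function on finite event sequences. -/
def runOf {X E : Type} (δ : X → E → Option X) : List E → X → Option X
  | [], x => some x
  | e :: s, x => (δ x e).bind (runOf δ s)

/-- A string consisting only of unobservable events. -/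
def UOString {E : Type} (uo : E → Prop) (s : List E) : Prop := ∀ e ∈ s, uo e

/-- Natural projection erasing unobservable events. -/
noncomputable def proj {E : Type} (uo : E → Prop) (s : List E) : List E :=
  s.filter (fun e => decide (¬ uo e))

/-- Legal control pattern: events with some strictly rank-decreasing occurrence
within the unobservable reach of `x`. -/
def gammaLeg {X E : Type} (δ : X → E → Option X) (uo : E → Prop)
    (ξ : X → ℕ) (x : X) : Set E :=
  {σ | ∃ s y z, UOString uo s ∧ runOf δ s x = some y ∧ δ y σ = some z ∧ ξ z < ξ y}

/-- Unobservable reach of `x` under control pattern `γ`. -/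
def UR {X E : Type} (δ : X → E → Option X) (uo : E → Prop)
    (γ : Set E) (x : X) : Set X :=
  {x' | ∃ u : List E, (∀ e ∈ u, uo e ∧ e ∈ γ) ∧ runOf δ u x = some x'}

/-- Membership in the next-state estimate `NS(s_o)` after observation `s_o`. -/
inductive NSmem {X E : Type} (δ : X → E → Option X) (uo : E → Prop)
    (x0 : X) : List E → X → Prop
  | init : NSmem δ uo x0 [] x0
  | step {so : List E} {x x' x'' : X} {σ : E} :
      NSmem δ uo x0 so x →
      x' ∈ UR δ uo Set.univ x →
      ¬ uo σ → δ x' σ = some x'' → NSmem δ uo x0 (so ++ [σ]) x''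

/-- Joint legal control pattern of the state estimate. -/
def gammaLegNS {X E : Type} (δ : X → E → Option X) (uo : E → Prop) (ξ : X → ℕ)
    (x0 : X) (so : List E) : Set E :=
  {σ | ∃ x, NSmem δ uo x0 so x ∧ σ ∈ gammaLeg δ uo ξ x}

/-- Permissive control pattern at state `x` and step `k`. -/
def gammaPer {X E : Type} (δ : X → E → Option X) (uo : E → Prop) (ξ : X → ℕ)
    (η : ℕ → ℝ) (x : X) (k : ℕ) : Set E :=
  {σ | ∀ s z, UOString uo s → runOf δ (s ++ [σ]) x = some z → (ξ z : ℝ) < η k}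

/-- Joint permissive control pattern of the state estimate. -/
def gammaPerNS {X E : Type} (δ : X → E → Option X) (uo : E → Prop) (ξ : X → ℕ)
    (η : ℕ → ℝ) (x0 : X) (so : List E) (k : ℕ) : Set E :=
  {σ | ∀ x, NSmem δ uo x0 so x → σ ∈ gammaPer δ uo ξ η x k}

/-- The on-line supervisor's control action after observation `so`. -/
def supAct {X E : Type} (δ : X → E → Option X) (uo : E → Prop) (ξ : X → ℕ)
    (η : ℕ → ℝ) (x0 : X) (so : List E) : Set E :=
  gammaLegNS δ uo ξ x0 so ∪ gammaPerNS δ uo ξ η x0 so so.length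

/-- `ξ̂(x)`: min over controllable successors' ranks if no uncontrollable event
is defined at `x`, else max over uncontrollable successors' ranks. -/
noncomputable def hatXi {X E : Type} (δ : X → E → Option X) (uc : E → Prop)
    (ξ : X → ℕ) (x : X) : ℕ :=
  if ∀ e, uc e → δ x e = none then
    sInf {n | ∃ e y, ¬ uc e ∧ δ x e = some y ∧ ξ y = n}
  else
    sSup {n | ∃ e y, uc e ∧ δ x e = some y ∧ ξ y = n}

/-- The update operator `up_α(r, x)`. -/
noncomputable def upA {X : Type} (α : ℕ) (F : Set X) (x : X) (r : ℕ) : ℕ :=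
  if x ∉ F ∧ r < α then r + 1 else r

/-- Observability of the product automaton w.r.t. `ξ` and the projection. -/
def Observable {X E : Type} (δ : X → E → Option X) (uo : E → Prop)
    (ξ : X → ℕ) (x0 : X) : Prop :=
  ∀ s s' : List E, ∀ σ : E,
    (runOf δ s x0).isSome → (runOf δ s' x0).isSome →
    proj uo s = proj uo s' →
    (∃ y z, runOf δ s x0 = some y ∧ δ y σ = some z ∧ ξ z < ξ y) →
    (runOf δ (s' ++ [σ]) x0).isSome →
    ∃ y z, runOf δ s' x0 = some y ∧ δ y σ = some z ∧ ξ z < ξ y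

/-- The list of states visited along a run. -/
def visited {X E : Type} (δ : X → E → Option X) : List E → X → Option (List X)
  | [], x => some [x]
  | e :: s, x => (δ x e).bind fun y => (visited δ s y).map (fun l => x :: l)

theorem runOf_append' {X E : Type} (δ : X → E → Option X) (a b : List E) (x : X) :
    runOf δ (a ++ b) x = (runOf δ a x).bind (runOf δ b) := by
  induction a generalizing x with
  | nil => simp [runOf]
  | cons e t ih =>
    simp only [List.cons_append, runOf]
    cases δ x e with
    | none => simp
    | some y => simp [ih]

theorem runOf_single' {X E : Type} (δ : X → E → Option X) (e : E) (x : X) :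
    runOf δ [e] x = δ x e := by
  cases h : δ x e <;> simp [runOf, h]

theorem proj_append' {E : Type} (uo : E → Prop) (a b : List E) :
    proj uo (a ++ b) = proj uo a ++ proj uo b := by
  simp [proj]

theorem proj_eq_nil' {E : Type} (uo : E → Prop) (u : List E) (h : UOString uo u) :
    proj uo u = [] := by
  simp only [proj, List.filter_eq_nil_iff]
  intro e he
  simp [h e he]

/-- Any state in `NS(so)` is reached by some string projecting to `so`. -/
theorem NSmem_string' {X E : Type} (δ : X → E → Option X) (uo : E → Prop)
    (x0 : X) {so : List E} {x : X} (h : NSmem δ uo x0 so x) :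
    ∃ t, proj uo t = so ∧ runOf δ t x0 = some x := by
  induction h with
  | init => exact ⟨[], rfl, rfl⟩
  | @step so x x' x'' σ hNS hUR hσ hδ ih =>
    obtain ⟨t, hpt, hrt⟩ := ih
    obtain ⟨u, hu, hru⟩ := hUR
    refine ⟨t ++ u ++ [σ], ?_, ?_⟩
    · rw [proj_append', proj_append', hpt,
        proj_eq_nil' uo u (fun e he => (hu e he).1)]
      simp [proj, hσ]
    · rw [runOf_append', runOf_append', hrt, Option.bind_some, hru,
        Option.bind_some, runOf_single', hδ]

/-- The actual current state is in the unobservable reach of some state of the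
state estimate. -/
theorem reach_NS' {X E : Type} (δ : X → E → Option X) (uo : E → Prop)
    (x0 : X) : ∀ (p : List E) (y : X), runOf δ p x0 = some y →
      ∃ x u, NSmem δ uo x0 (proj uo p) x ∧ UOString uo u ∧
        runOf δ u x = some y := by
  intro p
  induction p using List.reverseRecOn with
  | nil =>
    intro y hy
    obtain rfl : x0 = y := by simpa [runOf] using hy
    exact ⟨x0, [], NSmem.init, fun e he => absurd he List.not_mem_nil, rfl⟩
  | append_singleton t e ih =>
    intro y hy
    rw [runOf_append'] at hy
    cases h : runOf δ t x0 with
    | none => rw [h] at hy; simp at hy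
    | some y1 =>
      rw [h, Option.bind_some, runOf_single'] at hy
      obtain ⟨x, u, hNS, hUO, hru⟩ := ih y1 h
      by_cases huo : uo e
      · refine ⟨x, u ++ [e], ?_, ?_, ?_⟩
        · rw [proj_append', proj_eq_nil' uo [e]
            (fun e' he' => by simpa using (List.mem_singleton.mp he') ▸ huo)]
          simpa using hNS
        · intro e' he'
          rcases List.mem_append.mp he' with h' | h'
          · exact hUO e' h'
          · rwa [List.mem_singleton.mp h']
        · rw [runOf_append', hru, Option.bind_some, runOf_single', hy]
      · refine ⟨y, [], ?_, fun e' he' => absurd he' List.not_mem_nil, rfl⟩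
        rw [proj_append']
        have hpe : proj uo [e] = [e] := by simp [proj, huo]
        rw [hpe]
        exact NSmem.step hNS ⟨u, fun e' he' => ⟨hUO e' he', trivial⟩, hru⟩ huo hy

/-- along any infinite run consistent with the on-line supervisor
(with unbounded observation length), neutral transitions occur only finitely
often. -/
theorem stmt13 {X E : Type} (δ : X → E → Option X) (uo : E → Prop)
    (x0 : X) (ξ : X → ℕ) (α : ℕ) (η : ℕ → ℝ)
    (hη0 : η 0 ≤ (α : ℝ))
    (hmono : ∀ k, η (k + 1) ≤ η k)
    (hzero : ∃ k, η k = 0)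
    (hobs : Observable δ uo ξ x0)
    (s : ℕ → E)
    (hdef : ∀ k : ℕ, (runOf δ (List.ofFn fun i : Fin k => s i) x0).isSome)
    (hcons : ∀ k : ℕ,
      s k ∈ supAct δ uo ξ η x0 (proj uo (List.ofFn fun i : Fin k => s i)))
    (hobslen : ∀ n : ℕ,
      ∃ k : ℕ, n ≤ (proj uo (List.ofFn fun i : Fin k => s i)).length) :
    ¬ (∀ k : ℕ, ∃ l : ℕ, k ≤ l ∧ ∃ y z : X,
        runOf δ (List.ofFn fun i : Fin (l + 1) => s i) x0 = some y ∧
        runOf δ (List.ofFn fun i : Fin (l + 2) => s i) x0 = some z ∧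
        ξ y ≤ ξ z ∧ ξ z < α) := by
  intro H
  obtain ⟨K, hK⟩ := hzero
  have hanti : ∀ a b : ℕ, a ≤ b → η b ≤ η a := by
    intro a b h
    induction b, h using Nat.le_induction with
    | base => exact le_refl _
    | succ m hm ih => exact le_trans (hmono m) ih
  have hofn : ∀ m : ℕ, (List.ofFn fun i : Fin (m + 1) => s i) =
      (List.ofFn fun i : Fin m => s i) ++ [s m] := by
    intro m
    rw [List.ofFn_succ']
    simp [List.concat_eq_append]
  have hlenmono : ∀ k l : ℕ, k ≤ l →
      (proj uo (List.ofFn fun i : Fin k => s i)).length ≤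
      (proj uo (List.ofFn fun i : Fin l => s i)).length := by
    intro k l h
    induction l, h using Nat.le_induction with
    | base => exact le_refl _
    | succ m hm ih =>
      refine le_trans ih ?_
      rw [hofn m, proj_append', List.length_append]
      exact Nat.le_add_right _ _
  obtain ⟨k2, hk2⟩ := hobslen K
  obtain ⟨l, hl, y, z, hy, hz, hyz, hzα⟩ := H k2
  have hlist : (List.ofFn fun i : Fin (l + 2) => s i) =
      (List.ofFn fun i : Fin (l + 1) => s i) ++ [s (l + 1)] := hofn (l + 1)
  have hδyz : δ y (s (l + 1)) = some z := by
    rw [hlist, runOf_append', hy, Option.bind_some, runOf_single'] at hz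
    exact hz
  have hcon := hcons (l + 1)
  rcases hcon with hleg | hper
  · -- legal branch: observability forces a strict rank decrease, contradiction
    obtain ⟨x', hNS, u, a, b, hUO, hru, hδab, hlt⟩ := hleg
    obtain ⟨t, hpt, hrt⟩ := NSmem_string' δ uo x0 hNS
    have hrun' : runOf δ (t ++ u) x0 = some a := by
      rw [runOf_append', hrt, Option.bind_some, hru]
    have hproj : proj uo (t ++ u) =
        proj uo (List.ofFn fun i : Fin (l + 1) => s i) := by
      rw [proj_append', hpt, proj_eq_nil' uo u hUO, List.append_nil]
    have hdef2 : (runOf δ ((List.ofFn fun i : Fin (l + 1) => s i) ++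
        [s (l + 1)]) x0).isSome := by
      rw [← hlist]; exact hdef (l + 2)
    obtain ⟨y', z', hy', hδ', hlt'⟩ := hobs (t ++ u)
      (List.ofFn fun i : Fin (l + 1) => s i) (s (l + 1))
      (by rw [hrun']; exact Option.isSome_some) (hdef (l + 1)) hproj
      ⟨a, b, hrun', hδab, hlt⟩ hdef2
    rw [hy] at hy'
    obtain rfl : y = y' := by injection hy'
    rw [hδyz] at hδ'
    obtain rfl : z = z' := by injection hδ'
    omega
  · -- permissive branch: rank of z is below η(|so|) ≤ 0, contradiction
    obtain ⟨x, u, hNS, hUO, hru⟩ := reach_NS' δ uo x0 _ y hy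
    have hξ := hper x hNS u z hUO
      (by rw [runOf_append', hru, Option.bind_some, runOf_single', hδyz])
    have h1 : K ≤ (proj uo (List.ofFn fun i : Fin (l + 1) => s i)).length :=
      le_trans hk2 (hlenmono k2 (l + 1) (by omega))
    have h2 : η (proj uo (List.ofFn fun i : Fin (l + 1) => s i)).length ≤ 0 :=
      hK ▸ hanti K _ h1
    have h3 : (ξ z : ℝ) < 0 := lt_of_lt_of_le hξ h2
    exact absurd h3 (not_lt.mpr (Nat.cast_nonneg _))
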